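/- Let V be a real Hilbert space, V_n a finite-dimensional subspace and W_m a complete subspace of V with β := β(V_n, W_m) > 0. For ω ∈ W_m define the PBDW reconstruction u*(ω) := v*(ω) + ω − P_{W_m} v*(ω) with v*(ω) := (P_{V_n}∘P_{W_m}|_{V_n})^{-1}(P_{V_n} ω). Then for every u ∈ V, ‖u − u*(P_{W_m} u)‖ ≤ (1/β) · ε(u, V_n, W_m), where ε(u, V_n, W_m) := inf{‖u − v‖ : v ∈ V_n + (W_m ∩ V_n^⊥)}. -/

import Mathlib

open RealInnerProductSpace

private lemma le_of_sq_le_sq' {a b : ℝ} (hb : 0 ≤ b) (h : a ^ 2 ≤ b ^ 2) : a ≤ b := by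
  nlinarith

set_option maxHeartbeats 1000000 in
/-- The PBDW reconstruction error bound
`‖u − u*(P_{W_m} u)‖ ≤ (1/β) · ε(u, V_n, W_m)`, where
`ε(u, V_n, W_m) = inf {‖u − v‖ : v ∈ V_n + (W_m ∩ V_n^⊥)}` and
`u*(ω) = v*(ω) + ω − P_{W_m} v*(ω)` with `v*(ω)` characterized by
`P_{V_n}(P_{W_m} v*(ω)) = P_{V_n} ω`, here with `ω = P_{W_m} u`. -/
theorem stmt3 {V : Type*} [NormedAddCommGroup V] [InnerProductSpace ℝ V]
    (Vn Wm : Submodule ℝ V) [FiniteDimensional ℝ Vn] [CompleteSpace Wm]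
    (β : ℝ)
    (hβdef : β = sInf {r : ℝ | ∃ v ∈ Vn, v ≠ 0 ∧
      r = ‖(Submodule.orthogonalProjection Wm v : V)‖ / ‖v‖})
    (hβ : 0 < β)
    (u : V) (vstar : Vn)
    (hvstar : Submodule.orthogonalProjection Vn ((Submodule.orthogonalProjection Wm (vstar : V) : V))
      = Submodule.orthogonalProjection Vn ((Submodule.orthogonalProjection Wm u : V))) :
    ‖u - ((vstar : V) + (Submodule.orthogonalProjection Wm u : V)
        - (Submodule.orthogonalProjection Wm (vstar : V) : V))‖
      ≤ (1 / β) * Metric.infDist u ((Vn ⊔ (Wm ⊓ Vnᗮ) : Submodule ℝ V) : Set V) := by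
  classical
  set S : Set ℝ := {r : ℝ | ∃ v ∈ Vn, v ≠ 0 ∧
      r = ‖(Submodule.orthogonalProjection Wm v : V)‖ / ‖v‖} with hS
  have hbdd : BddBelow S := ⟨0, by
    rintro r ⟨v, hv, hv0, rfl⟩
    positivity⟩
  -- β ≤ ‖P_W v‖ / ‖v‖ for all nonzero v ∈ Vn, hence β * ‖v‖ ≤ ‖P_W v‖ for all v ∈ Vn
  have hβle : ∀ v ∈ Vn, β * ‖v‖ ≤ ‖(Submodule.orthogonalProjection Wm v : V)‖ := by
    intro v hv
    by_cases hv0 : v = 0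
    · simp [hv0]
    · have hmem : ‖(Submodule.orthogonalProjection Wm v : V)‖ / ‖v‖ ∈ S := ⟨v, hv, hv0, rfl⟩
      have h1 : β ≤ ‖(Submodule.orthogonalProjection Wm v : V)‖ / ‖v‖ := hβdef ▸ csInf_le hbdd hmem
      have hvpos : (0 : ℝ) < ‖v‖ := norm_pos_iff.mpr hv0
      calc β * ‖v‖ ≤ (‖(Submodule.orthogonalProjection Wm v : V)‖ / ‖v‖) * ‖v‖ :=
            mul_le_mul_of_nonneg_right h1 (norm_nonneg _)
        _ = ‖(Submodule.orthogonalProjection Wm v : V)‖ := by field_simp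
  -- β ≤ 1
  have hβ1 : β ≤ 1 := by
    by_cases hne : ∃ v ∈ Vn, v ≠ 0
    · obtain ⟨v, hv, hv0⟩ := hne
      have h1 : β ≤ ‖(Submodule.orthogonalProjection Wm v : V)‖ / ‖v‖ :=
        hβdef ▸ csInf_le hbdd ⟨v, hv, hv0, rfl⟩
      have h2 : ‖(Submodule.orthogonalProjection Wm v : V)‖ ≤ ‖v‖ := by
        have := norm_add_sq_eq_norm_sq_add_norm_sq_real
          (Submodule.inner_right_of_mem_orthogonal (K := Wm)
            (Submodule.orthogonalProjection Wm v).2 (show v - (Submodule.orthogonalProjection Wm v : V) ∈ Wmᗮ from Submodule.sub_starProjection_mem_orthogonal (K := Wm) v))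
        have hsum : (Submodule.orthogonalProjection Wm v : V) + (v - (Submodule.orthogonalProjection Wm v : V)) = v :=
          by abel
        rw [hsum] at this
        nlinarith [norm_nonneg (v - (Submodule.orthogonalProjection Wm v : V)), norm_nonneg v,
          norm_nonneg (Submodule.orthogonalProjection Wm v : V)]
      have hvpos : (0 : ℝ) < ‖v‖ := norm_pos_iff.mpr hv0
      calc β ≤ ‖(Submodule.orthogonalProjection Wm v : V)‖ / ‖v‖ := h1
        _ ≤ 1 := by rw [div_le_one hvpos]; exact h2
    · exfalso
      push_neg at hne
      have : S = ∅ := by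
        ext r
        simp only [hS, Set.mem_setOf_eq, Set.mem_empty_iff_false, iff_false]
        rintro ⟨v, hv, hv0, _⟩
        exact hv0 (hne v hv)
      rw [hβdef, this, Real.sInf_empty] at hβ
      exact lt_irrefl 0 hβ
  -- the error e = (I - P_W)(u - v*)
  set x : V := u - (vstar : V) with hx
  set e : V := x - (Submodule.orthogonalProjection Wm x : V) with he
  have heW : e ∈ Wmᗮ := Submodule.sub_starProjection_mem_orthogonal (K := Wm) x
  -- core lemma: for any v ∈ Vn, β * ‖e‖ ≤ ‖e - v‖
  have hcore : ∀ v ∈ Vn, β * ‖e‖ ≤ ‖e - v‖ := by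
    intro v hv
    set Pv : V := (Submodule.orthogonalProjection Wm v : V) with hPv
    have hPvW : Pv ∈ Wm := (Submodule.orthogonalProjection Wm v).2
    have h1 : β * ‖v‖ ≤ ‖Pv‖ := hβle v hv
    -- ⟪e, v⟫ = ⟪e, v - Pv⟫
    have hev : ⟪e, v⟫ = ⟪e, v - Pv⟫ := by
      rw [inner_sub_right, Submodule.inner_left_of_mem_orthogonal hPvW heW, sub_zero]
    have hcs : |⟪e, v⟫| ≤ ‖e‖ * ‖v - Pv‖ := by
      rw [hev]; exact abs_real_inner_le_norm e (v - Pv)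
    -- Pythagoras: ‖v‖² = ‖Pv‖² + ‖v - Pv‖²
    have hpyth : ‖v‖ ^ 2 = ‖Pv‖ ^ 2 + ‖v - Pv‖ ^ 2 := by
      have hinner : ⟪Pv, v - Pv⟫ = 0 :=
        Submodule.inner_right_of_mem_orthogonal (K := Wm) hPvW
          (show v - (Submodule.orthogonalProjection Wm v : V) ∈ Wmᗮ from Submodule.sub_starProjection_mem_orthogonal (K := Wm) v)
      have := norm_add_sq_eq_norm_sq_add_norm_sq_real hinner
      have hsum : Pv + (v - Pv) = v := by abel
      rw [hsum] at this; linarith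
    -- the quadratic estimate
    set s : ℝ := Real.sqrt (1 - β ^ 2) with hs
    have hs2 : s ^ 2 = 1 - β ^ 2 := Real.sq_sqrt (by nlinarith)
    have hsnn : 0 ≤ s := Real.sqrt_nonneg _
    have hc : ‖v - Pv‖ ≤ s * ‖v‖ := by
      have h2 : ‖v - Pv‖ ^ 2 ≤ (s * ‖v‖) ^ 2 := by
        have : (β * ‖v‖) ^ 2 ≤ ‖Pv‖ ^ 2 := by
          have := mul_self_le_mul_self (by positivity) h1
          nlinarith
        nlinarith
      exact le_of_sq_le_sq' (by positivity) h2
    have hsq : (β * ‖e‖) ^ 2 ≤ ‖e - v‖ ^ 2 := by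
      have hev2 : ‖e - v‖ ^ 2 = ‖e‖ ^ 2 - 2 * ⟪e, v⟫ + ‖v‖ ^ 2 := by
        rw [@norm_sub_sq_real]
      have habs : ⟪e, v⟫ ≤ ‖e‖ * ‖v - Pv‖ := le_trans (le_abs_self _) hcs
      nlinarith [sq_nonneg (s * ‖e‖ - ‖v‖), norm_nonneg e, norm_nonneg v,
        mul_le_mul_of_nonneg_left hc (norm_nonneg e)]
    exact le_of_sq_le_sq' (norm_nonneg _) hsq
  -- P_W x ∈ Wm ⊓ Vnᗮ
  have hPxVn : (Submodule.orthogonalProjection Wm x : V) ∈ Wm ⊓ Vnᗮ := by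
    refine ⟨(Submodule.orthogonalProjection Wm x).2, ?_⟩
    have h0 : Submodule.orthogonalProjection Vn ((Submodule.orthogonalProjection Wm x : V)) = 0 := by
      have : (Submodule.orthogonalProjection Wm x : V)
          = (Submodule.orthogonalProjection Wm u : V) - (Submodule.orthogonalProjection Wm (vstar : V) : V) := by
        rw [hx, map_sub]; rfl
      rw [this, map_sub, hvstar, sub_self]
    exact (Submodule.orthogonalProjectionOnto_eq_zero_iff (K := Vn)).mp h0
  -- z₀ := v* + P_W x ∈ Vn ⊔ (Wm ⊓ Vnᗮ) and u - z₀ = e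
  set Z : Submodule ℝ V := Vn ⊔ (Wm ⊓ Vnᗮ) with hZ
  have hz0 : (vstar : V) + (Submodule.orthogonalProjection Wm x : V) ∈ Z :=
    Submodule.add_mem_sup vstar.2 hPxVn
  have hue : u - ((vstar : V) + (Submodule.orthogonalProjection Wm x : V)) = e := by
    rw [he, hx]; abel
  -- for every z ∈ Z, β * ‖e‖ ≤ ‖u - z‖
  have hkey : ∀ z ∈ Z, β * ‖e‖ ≤ ‖u - z‖ := by
    intro z hz
    have hz' : z - ((vstar : V) + (Submodule.orthogonalProjection Wm x : V)) ∈ Z :=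
      Z.sub_mem hz hz0
    obtain ⟨y, hy, η, hη, hyη⟩ := Submodule.mem_sup.mp (hZ ▸ hz')
    -- u - z = (e - y) - η
    have huz : u - z = (e - y) - η := by
      have : z = ((vstar : V) + (Submodule.orthogonalProjection Wm x : V)) + (y + η) := by
        rw [hyη]; abel
      rw [this, ← hue]; abel
    have hinner : ⟪e - y, -η⟫ = 0 := by
      rw [inner_neg_right, inner_sub_left]
      have h1 : ⟪e, η⟫ = 0 := Submodule.inner_left_of_mem_orthogonal hη.1 heW
      have h2 : ⟪y, η⟫ = 0 := Submodule.inner_right_of_mem_orthogonal hy hη.2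
      rw [h1, h2]; ring
    have hpy : ‖u - z‖ ^ 2 = ‖e - y‖ ^ 2 + ‖η‖ ^ 2 := by
      have := norm_add_sq_eq_norm_sq_add_norm_sq_real hinner
      have hsum : (e - y) + (-η) = u - z := by rw [huz]; abel
      rw [hsum, norm_neg] at this
      simp only [pow_two]
      exact this
    have h1 : β * ‖e‖ ≤ ‖e - y‖ := hcore y hy
    have h2 : ‖e - y‖ ^ 2 ≤ ‖u - z‖ ^ 2 := by nlinarith [sq_nonneg ‖η‖]
    have h3 : ‖e - y‖ ≤ ‖u - z‖ := le_of_sq_le_sq' (norm_nonneg _) h2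
    linarith
  -- pass to the infimum
  have hne : ((Z : Set V)).Nonempty := ⟨0, Z.zero_mem⟩
  have hinf : β * ‖e‖ ≤ Metric.infDist u (Z : Set V) := by
    by_contra hcon
    push_neg at hcon
    obtain ⟨z, hz, hd⟩ := (Metric.infDist_lt_iff hne).mp hcon
    rw [dist_eq_norm] at hd
    exact absurd (hkey z hz) (by linarith)
  -- rewrite the goal
  have hgoal : u - ((vstar : V) + (Submodule.orthogonalProjection Wm u : V)
      - (Submodule.orthogonalProjection Wm (vstar : V) : V)) = e := by
    have hc : (Submodule.orthogonalProjection Wm x : V)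
        = (Submodule.orthogonalProjection Wm u : V) - (Submodule.orthogonalProjection Wm (vstar : V) : V) := by
      rw [hx, map_sub]; rfl
    rw [he, hx, hc]; abel
  rw [hgoal]
  calc ‖e‖ = (1 / β) * (β * ‖e‖) := by field_simp
    _ ≤ (1 / β) * Metric.infDist u ((Z : Submodule ℝ V) : Set V) :=
        mul_le_mul_of_nonneg_left hinf (by positivity)
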